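/- For every real m×n matrix A, the largest singular value satisfies σ₁(A) ≤ 2·√(|A|_∞·‖A‖_□·m·n), where |A|_∞ = max_{i,j}|a_{ij}|. -/

import Mathlib

open Matrix Finset

/-- The cut-norm of a real `m × n` matrix. -/
noncomputable def cutNorm {m n : ℕ} (A : Matrix (Fin m) (Fin n) ℝ) : ℝ :=
  Finset.univ.sup' Finset.univ_nonempty
    (fun p : Finset (Fin m) × Finset (Fin n) =>
      |∑ i ∈ p.1, ∑ j ∈ p.2, A i j| / (m * n))

/-- `|A|_∞ = max_{i,j} |a_{ij}|`. -/
noncomputable def supAbs {m n : ℕ} (A : Matrix (Fin m) (Fin n) ℝ) : ℝ :=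
  ⨆ i, ⨆ j, |A i j|

/-- `f` rearranged in decreasing order. -/
noncomputable def sortDesc {N : ℕ} (f : Fin N → ℝ) : Fin N → ℝ :=
  fun i => f (Tuple.sort f i.rev)

/-- The singular values `σ₁(A) ≥ σ₂(A) ≥ ⋯` of `A` (0-indexed):
`σ_{i+1}(A) = singVal A i` is the square root of the `(i+1)`-st largest
eigenvalue of the Hermitian matrix `Aᴴ A`. -/
noncomputable def singVal {m n : ℕ} (A : Matrix (Fin m) (Fin n) ℝ) (i : ℕ) : ℝ :=
  if h : i < n then
    Real.sqrt (sortDesc (Matrix.isHermitian_conjTranspose_mul_self A).eigenvalues ⟨i, h⟩)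
  else 0

lemma cutNorm_nonneg {m n : ℕ} (A : Matrix (Fin m) (Fin n) ℝ) : 0 ≤ cutNorm A := by
  have h := Finset.le_sup' (b := ((∅ : Finset (Fin m)), (∅ : Finset (Fin n))))
    (fun p : Finset (Fin m) × Finset (Fin n) =>
      |∑ i ∈ p.1, ∑ j ∈ p.2, A i j| / (m * n)) (mem_univ _)
  exact le_trans (by simp) h

lemma supAbs_nonneg {m n : ℕ} (A : Matrix (Fin m) (Fin n) ℝ) : 0 ≤ supAbs A :=
  Real.iSup_nonneg fun _ => Real.iSup_nonneg fun _ => abs_nonneg _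

lemma abs_le_supAbs {m n : ℕ} (A : Matrix (Fin m) (Fin n) ℝ) (i : Fin m) (j : Fin n) :
    |A i j| ≤ supAbs A := by
  have h1 : |A i j| ≤ ⨆ j', |A i j'| :=
    le_ciSup (f := fun j' => |A i j'|) (Set.Finite.bddAbove (Set.finite_range _)) j
  exact h1.trans (le_ciSup (f := fun i' => ⨆ j', |A i' j'|)
    (Set.Finite.bddAbove (Set.finite_range _)) i)

lemma blockSum_le {m n : ℕ} (A : Matrix (Fin m) (Fin n) ℝ)
    (X : Finset (Fin m)) (Y : Finset (Fin n)) :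
    |∑ i ∈ X, ∑ j ∈ Y, A i j| ≤ cutNorm A * m * n := by
  rcases Nat.eq_zero_or_pos m with hm | hm
  · subst hm
    have : X = ∅ := Finset.eq_empty_of_isEmpty X
    simp [this]
  rcases Nat.eq_zero_or_pos n with hn | hn
  · subst hn
    have : Y = ∅ := Finset.eq_empty_of_isEmpty Y
    simp [this]
  have hmn : (0 : ℝ) < (m : ℝ) * n := by positivity
  have h := Finset.le_sup' (b := (X, Y))
    (fun p : Finset (Fin m) × Finset (Fin n) =>
      |∑ i ∈ p.1, ∑ j ∈ p.2, A i j| / (m * n)) (mem_univ _)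
  rw [div_le_iff₀ hmn] at h
  calc |∑ i ∈ X, ∑ j ∈ Y, A i j| ≤ cutNorm A * ((m : ℝ) * n) := h
    _ = cutNorm A * m * n := by ring

lemma sumAbs_col {m n : ℕ} (A : Matrix (Fin m) (Fin n) ℝ) (K : Finset (Fin n)) :
    ∑ i, |∑ k ∈ K, A i k| ≤ 2 * (cutNorm A * m * n) := by
  classical
  set w : Fin m → ℝ := fun i => ∑ k ∈ K, A i k with hw
  have hsplit := Finset.sum_filter_add_sum_filter_not (univ : Finset (Fin m))
    (fun i => 0 ≤ w i) (fun i => |w i|)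
  have h1 : ∑ i ∈ univ.filter (fun i => 0 ≤ w i), |w i|
      = ∑ i ∈ univ.filter (fun i => 0 ≤ w i), ∑ k ∈ K, A i k :=
    Finset.sum_congr rfl fun i hi => abs_of_nonneg (Finset.mem_filter.1 hi).2
  have h2 : ∑ i ∈ univ.filter (fun i => ¬ 0 ≤ w i), |w i|
      = -∑ i ∈ univ.filter (fun i => ¬ 0 ≤ w i), ∑ k ∈ K, A i k := by
    rw [← Finset.sum_neg_distrib]
    exact Finset.sum_congr rfl fun i hi =>
      abs_of_neg (lt_of_not_ge (Finset.mem_filter.1 hi).2)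
  have b1 := blockSum_le A (univ.filter (fun i => 0 ≤ w i)) K
  have b2 := blockSum_le A (univ.filter (fun i => ¬ 0 ≤ w i)) K
  have := abs_le.1 b1
  have := abs_le.1 b2
  calc ∑ i, |w i|
      = ∑ i ∈ univ.filter (fun i => 0 ≤ w i), |w i|
        + ∑ i ∈ univ.filter (fun i => ¬ 0 ≤ w i), |w i| := hsplit.symm
    _ ≤ cutNorm A * m * n + cutNorm A * m * n := by
        gcongr ?_ + ?_
        · rw [h1]; exact (le_abs_self _).trans b1
        · rw [h2]; exact (neg_le_abs _).trans b2
    _ = 2 * (cutNorm A * m * n) := by ring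

lemma colBlock_le {m n : ℕ} (A : Matrix (Fin m) (Fin n) ℝ) (j : Fin n)
    (K : Finset (Fin n)) :
    |∑ k ∈ K, ∑ i, A i j * A i k| ≤ supAbs A * (2 * (cutNorm A * m * n)) := by
  rw [Finset.sum_comm]
  have h1 : ∑ i, ∑ k ∈ K, A i j * A i k = ∑ i, A i j * ∑ k ∈ K, A i k := by
    refine Finset.sum_congr rfl fun i _ => ?_
    rw [Finset.mul_sum]
  rw [h1]
  calc |∑ i, A i j * ∑ k ∈ K, A i k|
      ≤ ∑ i, |A i j * ∑ k ∈ K, A i k| := Finset.abs_sum_le_sum_abs _ _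
    _ = ∑ i, |A i j| * |∑ k ∈ K, A i k| := by simp [abs_mul]
    _ ≤ ∑ i, supAbs A * |∑ k ∈ K, A i k| := by
        exact Finset.sum_le_sum fun i _ =>
          mul_le_mul_of_nonneg_right (abs_le_supAbs A i j) (abs_nonneg _)
    _ = supAbs A * ∑ i, |∑ k ∈ K, A i k| := by rw [Finset.mul_sum]
    _ ≤ supAbs A * (2 * (cutNorm A * m * n)) :=
        mul_le_mul_of_nonneg_left (sumAbs_col A K) (supAbs_nonneg A)

lemma rowSum_le {m n : ℕ} (A : Matrix (Fin m) (Fin n) ℝ) (j : Fin n) :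
    ∑ k, |∑ i, A i j * A i k| ≤ 4 * (supAbs A * (cutNorm A * m * n)) := by
  classical
  set g : Fin n → ℝ := fun k => ∑ i, A i j * A i k with hg
  have hsplit := Finset.sum_filter_add_sum_filter_not (univ : Finset (Fin n))
    (fun k => 0 ≤ g k) (fun k => |g k|)
  have h1 : ∑ k ∈ univ.filter (fun k => 0 ≤ g k), |g k|
      = ∑ k ∈ univ.filter (fun k => 0 ≤ g k), g k :=
    Finset.sum_congr rfl fun k hk => abs_of_nonneg (Finset.mem_filter.1 hk).2
  have h2 : ∑ k ∈ univ.filter (fun k => ¬ 0 ≤ g k), |g k|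
      = -∑ k ∈ univ.filter (fun k => ¬ 0 ≤ g k), g k := by
    rw [← Finset.sum_neg_distrib]
    exact Finset.sum_congr rfl fun k hk =>
      abs_of_neg (lt_of_not_ge (Finset.mem_filter.1 hk).2)
  have b1 := colBlock_le A j (univ.filter (fun k => 0 ≤ g k))
  have b2 := colBlock_le A j (univ.filter (fun k => ¬ 0 ≤ g k))
  calc ∑ k, |g k|
      = ∑ k ∈ univ.filter (fun k => 0 ≤ g k), |g k|
        + ∑ k ∈ univ.filter (fun k => ¬ 0 ≤ g k), |g k| := hsplit.symm
    _ ≤ supAbs A * (2 * (cutNorm A * m * n)) + supAbs A * (2 * (cutNorm A * m * n)) := by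
        gcongr ?_ + ?_
        · rw [h1]; exact (le_abs_self _).trans b1
        · rw [h2]; exact (neg_le_abs _).trans b2
    _ = 4 * (supAbs A * (cutNorm A * m * n)) := by ring

lemma gersh {n : ℕ} (H : Matrix (Fin n) (Fin n) ℝ) (μ : ℝ) (v : Fin n → ℝ)
    (hv : v ≠ 0) (he : H *ᵥ v = μ • v) : ∃ j, |μ| ≤ ∑ k, |H j k| := by
  obtain ⟨i0, hi0⟩ := Function.ne_iff.1 hv
  have hne : (univ : Finset (Fin n)).Nonempty := ⟨i0, mem_univ _⟩
  obtain ⟨j, -, hj⟩ := Finset.exists_max_image univ (fun i => |v i|) hne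
  have hvj : 0 < |v j| := by
    have := hj i0 (mem_univ _)
    have h0 : 0 < |v i0| := abs_pos.2 (by simpa using hi0)
    linarith
  refine ⟨j, ?_⟩
  have hμ : μ * v j = ∑ k, H j k * v k := by
    have := congrFun he j
    simp [Matrix.mulVec, dotProduct, Pi.smul_apply, smul_eq_mul] at this
    linarith [this]
  have : |μ| * |v j| ≤ (∑ k, |H j k|) * |v j| := by
    calc |μ| * |v j| = |μ * v j| := (abs_mul _ _).symm
      _ = |∑ k, H j k * v k| := by rw [hμ]
      _ ≤ ∑ k, |H j k * v k| := Finset.abs_sum_le_sum_abs _ _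
      _ ≤ ∑ k, |H j k| * |v j| := by
          gcongr with k
          rw [abs_mul]
          exact mul_le_mul_of_nonneg_left (hj k (mem_univ _)) (abs_nonneg _)
      _ = (∑ k, |H j k|) * |v j| := by rw [Finset.sum_mul]
  exact le_of_mul_le_mul_right this hvj

lemma eig_le {m n : ℕ} (A : Matrix (Fin m) (Fin n) ℝ) (k : Fin n) :
    (Matrix.isHermitian_conjTranspose_mul_self A).eigenvalues k
      ≤ 4 * (supAbs A * (cutNorm A * m * n)) := by
  set hH := Matrix.isHermitian_conjTranspose_mul_self A
  have hv : (⇑(hH.eigenvectorBasis k) : Fin n → ℝ) ≠ 0 :=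
    fun h0 => hH.eigenvectorBasis.orthonormal.ne_zero k ((WithLp.ofLp_eq_zero 2).1 h0)
  have he := hH.mulVec_eigenvectorBasis k
  obtain ⟨j, hj⟩ := gersh (Aᴴ * A) (hH.eigenvalues k) _ hv he
  have hentry : ∀ l, (Aᴴ * A) j l = ∑ i, A i j * A i l := by
    intro l
    simp [Matrix.mul_apply, Matrix.conjTranspose_apply]
  have hrow : ∑ l, |(Aᴴ * A) j l| = ∑ l, |∑ i, A i j * A i l| := by
    refine Finset.sum_congr rfl fun l _ => ?_
    rw [hentry l]
  calc hH.eigenvalues k ≤ |hH.eigenvalues k| := le_abs_self _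
    _ ≤ ∑ l, |(Aᴴ * A) j l| := hj
    _ = ∑ l, |∑ i, A i j * A i l| := hrow
    _ ≤ 4 * (supAbs A * (cutNorm A * m * n)) := rowSum_le A j


/-- For every real `m × n` matrix, `σ₁(A) ≤ 2 √(|A|_∞ ‖A‖_□ m n)`. -/
theorem singVal_one_le_cutNorm_real {m n : ℕ} (A : Matrix (Fin m) (Fin n) ℝ) :
    singVal A 0 ≤ 2 * Real.sqrt (supAbs A * cutNorm A * m * n) := by
  have hP : (0 : ℝ) ≤ supAbs A * cutNorm A * m * n := by
    have := supAbs_nonneg A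
    have := cutNorm_nonneg A
    positivity
  unfold singVal
  split_ifs with h
  · unfold sortDesc
    set k := Tuple.sort (Matrix.isHermitian_conjTranspose_mul_self A).eigenvalues
      (Fin.rev ⟨0, h⟩)
    have key := eig_le A k
    have key2 : (Matrix.isHermitian_conjTranspose_mul_self A).eigenvalues k
        ≤ 4 * (supAbs A * cutNorm A * m * n) := by
      calc _ ≤ 4 * (supAbs A * (cutNorm A * m * n)) := key
        _ = 4 * (supAbs A * cutNorm A * m * n) := by ring
    calc Real.sqrt ((Matrix.isHermitian_conjTranspose_mul_self A).eigenvalues k)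
        ≤ Real.sqrt (4 * (supAbs A * cutNorm A * m * n)) := Real.sqrt_le_sqrt key2
      _ = Real.sqrt 4 * Real.sqrt (supAbs A * cutNorm A * m * n) :=
          Real.sqrt_mul (by norm_num) _
      _ = 2 * Real.sqrt (supAbs A * cutNorm A * m * n) := by
          rw [show (4 : ℝ) = 2 ^ 2 by norm_num, Real.sqrt_sq (by norm_num : (0:ℝ) ≤ 2)]
  · positivity
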